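/- Let α ∈ ℂ and let P be a polynomial with complex coefficients in the variables λ, x₁, x₂, … (only finitely many occurring). Consider the system of equations (1/k!)·∂^kP/∂λ^k = α·∂P/∂x_k for all k ≥ 1. (a) If α = 0, then P satisfies the system if and only if P is independent of λ. (b) If α ≠ 0, β = 1/α, and P is homogeneous of degree d ≥ 1 for the grading deg λ = 1, deg x_k = k, then P satisfies the system if and only if P = δ·(M_λ + T + β·M_{x₁})^d(1) for some δ ∈ ℂ, where T is the derivation of ℂ[λ,x₁,x₂,…] determined by T(λ) = 0 and T(x_k) = x_{k+1}, M_λ and M_{x₁} denote multiplication by λ and by x₁, and the operator M_λ + T + β·M_{x₁} is applied d times to the constant polynomial 1. -/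

import Mathlib

open MvPolynomial

/- We work in `ℂ[λ,x₁,x₂,…] = MvPolynomial ℕ ℂ`, where `X 0 = λ` and `X k = x_k` for `k ≥ 1`. -/

/-- The derivation `T` of `ℂ[λ,x₁,x₂,…]` with `T(λ) = 0` and `T(x_k) = x_{k+1}`. -/
noncomputable def Tx : Derivation ℂ (MvPolynomial ℕ ℂ) (MvPolynomial ℕ ℂ) :=
  MvPolynomial.mkDerivation ℂ fun k => if k = 0 then 0 else X (k + 1)

namespace Stmt11Aux

abbrev MvP : Type := MvPolynomial ℕ ℂ

noncomputable def w : ℕ → ℕ := fun k => if k = 0 then 1 else k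

noncomputable def Lf (β : ℂ) : MvP → MvP := fun q => X 0 * q + Tx q + C β * (X 1 * q)

noncomputable def Df : MvP → MvP := fun q => pderiv 0 q

noncomputable def Q (β : ℂ) (d : ℕ) : MvP := (Lf β)^[d] 1

lemma Q_succ (β : ℂ) (d : ℕ) : Q β (d + 1) = Lf β (Q β d) :=
  Function.iterate_succ_apply' _ _ _

lemma Tx_X (i : ℕ) : Tx (X i) = if i = 0 then 0 else X (i + 1) := by
  unfold Tx; exact mkDerivation_X (R := ℂ) _ i

lemma Tx_Cmul (a : ℂ) (p : MvP) : Tx (C a * p) = C a * Tx p := by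
  rw [C_mul', C_mul', Derivation.map_smul]

lemma pderiv_Cmul (i : ℕ) (a : ℂ) (p : MvP) :
    pderiv i (C a * p) = C a * pderiv i p := by
  rw [pderiv_mul, pderiv_C, zero_mul, zero_add]

lemma bracket_Tx (k : ℕ) :
    ⁅(pderiv k : Derivation ℂ MvP MvP), Tx⁆ =
      if 2 ≤ k then (pderiv (k - 1) : Derivation ℂ MvP MvP) else 0 := by
  apply MvPolynomial.derivation_ext
  intro i
  rw [Derivation.commutator_apply, Tx_X]
  match k with
  | 0 =>
    rw [if_neg (show ¬ (2:ℕ) ≤ 0 by omega)]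
    by_cases hi : i = 0
    · subst hi
      simp [Derivation.map_one_eq_zero]
    · rw [if_neg hi, pderiv_X_of_ne (show i + 1 ≠ 0 by omega),
        pderiv_X_of_ne (show i ≠ 0 from hi)]
      simp
  | 1 =>
    rw [if_neg (show ¬ (2:ℕ) ≤ 1 by omega)]
    by_cases hi : i = 0
    · subst hi
      rw [if_pos rfl, pderiv_X_of_ne (show (0:ℕ) ≠ 1 by omega)]
      simp
    · rw [if_neg hi, pderiv_X_of_ne (show i + 1 ≠ 1 by omega)]
      by_cases hi1 : i = 1
      · subst hi1
        rw [pderiv_X_self]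
        simp [Derivation.map_one_eq_zero]
      · rw [pderiv_X_of_ne (show i ≠ 1 from hi1)]
        simp
  | (m+2) =>
    rw [if_pos (show (2:ℕ) ≤ m + 2 by omega)]
    by_cases hi : i = 0
    · subst hi
      rw [if_pos rfl, pderiv_X_of_ne (show (0:ℕ) ≠ m + 2 by omega),
        pderiv_X_of_ne (show (0:ℕ) ≠ m + 2 - 1 by omega)]
      simp
    · rw [if_neg hi]
      by_cases him : i = m + 1
      · subst him
        rw [pderiv_X_of_ne (show m + 1 ≠ m + 2 by omega), pderiv_X_self]
        simp [show m + 2 - 1 = m + 1 by omega]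
      · rw [pderiv_X_of_ne (show i ≠ m + 2 - 1 by omega),
          pderiv_X_of_ne (show i + 1 ≠ m + 2 by omega)]
        by_cases him2 : i = m + 2
        · subst him2
          rw [pderiv_X_self]
          simp [Derivation.map_one_eq_zero]
        · rw [pderiv_X_of_ne (show i ≠ m + 2 from him2)]
          simp

lemma comm_Tx_le_one {k : ℕ} (hk : k ≤ 1) (q : MvP) :
    pderiv k (Tx q) = Tx (pderiv k q) := by
  have h2 := DFunLike.congr_fun (bracket_Tx k) q
  rw [if_neg (by omega), Derivation.commutator_apply] at h2
  simp only [Derivation.zero_apply] at h2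
  exact sub_eq_zero.mp h2

lemma comm_Tx_ge_two {k : ℕ} (hk : 2 ≤ k) (q : MvP) :
    pderiv k (Tx q) = Tx (pderiv k q) + pderiv (k - 1) q := by
  have h2 := DFunLike.congr_fun (bracket_Tx k) q
  rw [if_pos hk, Derivation.commutator_apply] at h2
  rw [sub_eq_iff_eq_add] at h2
  rw [h2, add_comm]

lemma bracket_pderiv (k : ℕ) (q : MvP) :
    pderiv 0 (pderiv k q) = pderiv k (pderiv 0 q) := by
  have h : ⁅(pderiv 0 : Derivation ℂ MvP MvP), (pderiv k : Derivation ℂ MvP MvP)⁆ = 0 := by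
    apply MvPolynomial.derivation_ext
    intro i
    rw [Derivation.commutator_apply]
    by_cases hik : i = k
    · subst hik
      by_cases hi : i = 0
      · subst hi; simp
      · rw [pderiv_X_self, pderiv_X_of_ne (show i ≠ 0 from hi)]
        simp
    · rw [pderiv_X_of_ne (show i ≠ k from hik)]
      by_cases hi : i = 0
      · subst hi
        rw [pderiv_X_self]
        simp
      · rw [pderiv_X_of_ne (show i ≠ 0 from hi)]
        simp
  have h2 := DFunLike.congr_fun h q
  rw [Derivation.commutator_apply] at h2
  simp only [Derivation.zero_apply] at h2
  exact sub_eq_zero.mp h2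

lemma Lf_add (β : ℂ) (p q : MvP) : Lf β (p + q) = Lf β p + Lf β q := by
  simp only [Lf, map_add]; ring

lemma Lf_Cmul (β a : ℂ) (p : MvP) : Lf β (C a * p) = C a * Lf β p := by
  simp only [Lf, Tx_Cmul]; ring

lemma Lf_zero (β : ℂ) : Lf β 0 = 0 := by
  simp [Lf]

lemma pderiv0_Lf (β : ℂ) (q : MvP) :
    pderiv 0 (Lf β q) = q + Lf β (pderiv 0 q) := by
  simp only [Lf, map_add, pderiv_mul, pderiv_X_self, pderiv_C,
    pderiv_X_of_ne (show (1:ℕ) ≠ 0 by omega), comm_Tx_le_one (show (0:ℕ) ≤ 1 by omega)]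
  ring

lemma pderiv1_Lf (β : ℂ) (q : MvP) :
    pderiv 1 (Lf β q) = Lf β (pderiv 1 q) + C β * q := by
  simp only [Lf, map_add, pderiv_mul, pderiv_X_self, pderiv_C,
    pderiv_X_of_ne (show (0:ℕ) ≠ 1 by omega), comm_Tx_le_one (le_refl 1)]
  ring

lemma pderivk_Lf {k : ℕ} (hk : 2 ≤ k) (β : ℂ) (q : MvP) :
    pderiv k (Lf β q) = Lf β (pderiv k q) + pderiv (k - 1) q := by
  simp only [Lf, map_add, pderiv_mul, pderiv_C,
    pderiv_X_of_ne (show (0:ℕ) ≠ k by omega),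
    pderiv_X_of_ne (show (1:ℕ) ≠ k by omega), comm_Tx_ge_two hk]
  ring

lemma Df_add (k : ℕ) (p q : MvP) : Df^[k] (p + q) = Df^[k] p + Df^[k] q := by
  induction k generalizing p q with
  | zero => simp
  | succ m ih =>
    rw [Function.iterate_succ_apply, Function.iterate_succ_apply,
      Function.iterate_succ_apply, show Df (p + q) = Df p + Df q from map_add _ _ _, ih]

lemma Df_Cmul (k : ℕ) (a : ℂ) (p : MvP) : Df^[k] (C a * p) = C a * Df^[k] p := by
  induction k generalizing p with
  | zero => simp
  | succ m ih =>
    rw [Function.iterate_succ_apply, Function.iterate_succ_apply,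
      show Df (C a * p) = C a * Df p from pderiv_Cmul 0 a p, ih]

lemma Df_zero (k : ℕ) : Df^[k] (0 : MvP) = 0 := by
  induction k with
  | zero => simp
  | succ m ih => rw [Function.iterate_succ_apply, show Df (0:MvP) = 0 from map_zero _, ih]

lemma Df_sub (k : ℕ) (p q : MvP) : Df^[k] (p - q) = Df^[k] p - Df^[k] q := by
  have h := Df_add k (p - q) q
  rw [sub_add_cancel] at h
  rw [h]; ring

lemma Df_one {k : ℕ} (hk : 1 ≤ k) : Df^[k] (1 : MvP) = 0 := by
  obtain ⟨m, rfl⟩ : ∃ m, k = m + 1 := ⟨k - 1, by omega⟩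
  rw [Function.iterate_succ_apply, show Df (1:MvP) = 0 from Derivation.map_one_eq_zero _,
    Df_zero]

lemma Df_Lf (β : ℂ) : ∀ (k : ℕ) (q : MvP),
    Df^[k+1] (Lf β q) = Lf β (Df^[k+1] q) + (C ((k:ℕ) : ℂ) + 1) * Df^[k] q := by
  intro k
  induction k with
  | zero =>
    intro q
    simp only [Function.iterate_one, Function.iterate_zero, id_eq, Nat.cast_zero, map_zero,
      zero_add, one_mul]
    rw [show Df (Lf β q) = q + Lf β (Df q) from pderiv0_Lf β q, add_comm]
  | succ m ih =>
    intro q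
    calc Df^[m+1+1] (Lf β q) = Df^[m+1] (Df (Lf β q)) :=
          Function.iterate_succ_apply Df (m+1) (Lf β q)
      _ = Df^[m+1] (q + Lf β (Df q)) := by
          rw [show Df (Lf β q) = q + Lf β (Df q) from pderiv0_Lf β q]
      _ = Df^[m+1] q + (Lf β (Df^[m+1] (Df q)) + (C ((m:ℕ):ℂ) + 1) * Df^[m] (Df q)) := by
          rw [Df_add, ih (Df q)]
      _ = Df^[m+1] q + (Lf β (Df^[m+1+1] q) + (C ((m:ℕ):ℂ) + 1) * Df^[m+1] q) := by
          rw [← Function.iterate_succ_apply Df (m+1) q, ← Function.iterate_succ_apply Df m q]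
      _ = Lf β (Df^[m+1+1] q) + (C ((m+1 : ℕ) : ℂ) + 1) * Df^[m+1] q := by
          have h9 : (C ((m+1 : ℕ) : ℂ) : MvP) = C ((m:ℕ):ℂ) + 1 := by
            rw [Nat.cast_add, Nat.cast_one, map_add, map_one]
          rw [h9]
          ring

lemma Q_sol {α β : ℂ} (hαβ : α * β = 1) : ∀ (d k : ℕ), 1 ≤ k →
    Df^[k] (Q β d) = C ((k.factorial : ℂ) * α) * pderiv k (Q β d) := by
  intro d
  induction d with
  | zero =>
    intro k hk
    simp [Q, Df_one hk]
  | succ d ih =>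
    intro k hk
    rw [Q_succ]
    match k, hk with
    | 1, _ =>
      rw [show Df^[1] = Df from Function.iterate_one Df,
        show Df (Lf β (Q β d)) = Q β d + Lf β (Df (Q β d)) from pderiv0_Lf β _,
        show Df (Q β d) = Df^[1] (Q β d) from (Function.iterate_one Df ▸ rfl),
        ih 1 le_rfl, Lf_Cmul, pderiv1_Lf]
      rw [Nat.factorial_one, Nat.cast_one, one_mul, mul_add, ← mul_assoc, ← map_mul, hαβ,
        map_one, one_mul, add_comm]
    | (m+2), _ =>
      rw [show m + 2 = m + 1 + 1 from rfl, Df_Lf β (m+1) (Q β d),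
        ih (m+1+1) (by omega), ih (m+1) (by omega), Lf_Cmul,
        pderivk_Lf (show 2 ≤ m + 1 + 1 by omega), show m + 1 + 1 - 1 = m + 1 from rfl]
      have h2 : ((C ((m+1:ℕ):ℂ) + 1) * C (((m+1).factorial : ℂ) * α) : MvP)
          = C ((((m+1+1).factorial : ℕ) : ℂ) * α) := by
        rw [show (1:MvP) = C 1 from (map_one C).symm, ← map_add, ← map_mul]
        congr 1
        rw [Nat.factorial_succ (m+1)]
        push_cast
        ring
      rw [← mul_assoc, h2]
      ring

lemma weight_single (i : ℕ) : (Finsupp.weight w) (Finsupp.single i 1) = w i := by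
  rw [Finsupp.weight_apply, Finsupp.sum_single_index] <;> simp

lemma sub_add_single {s : ℕ →₀ ℕ} {i : ℕ} (hi : s i ≠ 0) :
    s - Finsupp.single i 1 + Finsupp.single i 1 = s := by
  ext a
  simp only [Finsupp.add_apply, Finsupp.tsub_apply, Finsupp.single_apply]
  split_ifs with h
  · subst h; omega
  · omega

lemma Tx_monomial (s : ℕ →₀ ℕ) (a : ℂ) :
    Tx (monomial s a) = a • s.sum fun i k =>
      monomial (s - Finsupp.single i 1) (k : ℂ) • (if i = 0 then (0:MvP) else X (i + 1)) := by
  unfold Tx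
  exact mkDerivation_monomial (R := ℂ) (fun k => if k = 0 then (0:MvP) else X (k + 1)) s a

lemma Tx_homog {p : MvP} {n : ℕ} (hp : p.IsWeightedHomogeneous w n) :
    (Tx p).IsWeightedHomogeneous w (n + 1) := by
  nth_rewrite 1 [p.as_sum]
  rw [map_sum]
  apply IsWeightedHomogeneous.sum
  intro s hs
  have hsn : (Finsupp.weight w) s = n := hp (mem_support_iff.mp hs)
  rw [Tx_monomial, ← mem_weightedHomogeneousSubmodule]
  apply Submodule.smul_mem
  rw [Finsupp.sum]
  apply Submodule.sum_mem
  intro i hi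
  rw [mem_weightedHomogeneousSubmodule]
  by_cases hi0 : i = 0
  · rw [if_pos hi0, smul_zero]
    exact isWeightedHomogeneous_zero ℂ w _
  · rw [if_neg hi0, smul_eq_mul]
    have hsi : s i ≠ 0 := Finsupp.mem_support_iff.mp hi
    have hw : (Finsupp.weight w) (s - Finsupp.single i 1) + w i = n := by
      have := congrArg (Finsupp.weight w) (sub_add_single hsi)
      rw [map_add, weight_single] at this
      rw [this, hsn]
    have h1 : IsWeightedHomogeneous w
        ((monomial (s - Finsupp.single i 1) ((s i : ℂ))) * X (i+1))
        ((Finsupp.weight w) (s - Finsupp.single i 1) + w (i+1)) :=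
      (isWeightedHomogeneous_monomial w _ _ rfl).mul (isWeightedHomogeneous_X ℂ w (i+1))
    have h2 : (Finsupp.weight w) (s - Finsupp.single i 1) + w (i+1) = n + 1 := by
      have e1 : w i = i := by unfold w; rw [if_neg hi0]
      have e2 : w (i+1) = i + 1 := by unfold w; rw [if_neg (by omega)]
      omega
    rwa [h2] at h1

lemma Q_homog (β : ℂ) (d : ℕ) : (Q β d).IsWeightedHomogeneous w d := by
  induction d with
  | zero =>
    have := isWeightedHomogeneous_one (R := ℂ) (σ := ℕ) w
    simpa [Q] using this
  | succ d ih =>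
    rw [Q_succ]
    unfold Lf
    apply IsWeightedHomogeneous.add
    apply IsWeightedHomogeneous.add
    · have h1 := (isWeightedHomogeneous_X ℂ w 0).mul ih
      have e : w 0 + d = d + 1 := by unfold w; simp; omega
      rwa [e] at h1
    · exact Tx_homog ih
    · have h1 := (isWeightedHomogeneous_C w β).mul ((isWeightedHomogeneous_X ℂ w 1).mul ih)
      have e : (0 : ℕ) + (w 1 + d) = d + 1 := by unfold w; simp; omega
      rwa [e] at h1

lemma coeff_pderiv (i : ℕ) (t : ℕ →₀ ℕ) (p : MvP) :
    coeff t (pderiv i p) = ((t i : ℂ) + 1) * coeff (t + Finsupp.single i 1) p := by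
  induction p using MvPolynomial.induction_on' with
  | add p q hp hq =>
    rw [map_add, coeff_add, coeff_add, hp, hq]
    ring
  | monomial s a =>
    classical
    rw [pderiv_monomial, coeff_monomial, coeff_monomial]
    by_cases h : s = t + Finsupp.single i 1
    · subst h
      rw [if_pos rfl, if_pos (by
        ext a
        simp only [Finsupp.tsub_apply, Finsupp.add_apply, Finsupp.single_apply]
        omega)]
      have h5 : ((t + Finsupp.single i 1) : ℕ →₀ ℕ) i = t i + 1 := by
        simp [Finsupp.add_apply, Finsupp.single_apply]
      rw [h5]
      push_cast
      ring
    · rw [if_neg h]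
      by_cases hsi : s i = 0
      · split_ifs <;> simp [hsi]
      · rw [if_neg (by
          intro he
          exact h (by rw [← he, sub_add_single hsi]))]
        ring

lemma pderiv_homog {p : MvP} {n : ℕ} (hp : p.IsWeightedHomogeneous w (n + 1)) :
    (pderiv 0 p).IsWeightedHomogeneous w n := by
  intro t ht
  rw [coeff_pderiv] at ht
  have h2 : coeff (t + Finsupp.single 0 1) p ≠ 0 := by
    intro h; rw [h, mul_zero] at ht; exact ht rfl
  have h3 := hp h2
  rw [map_add, weight_single] at h3
  have e : w 0 = 1 := rfl
  omega

lemma eq_zero_of_pderiv {p : MvP} {n : ℕ} (hn : 1 ≤ n)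
    (hp : p.IsWeightedHomogeneous w n) (h : ∀ i, pderiv i p = 0) : p = 0 := by
  rw [MvPolynomial.eq_zero_iff]
  intro s
  by_contra hs
  have hws := hp hs
  have hsne : s ≠ 0 := by
    intro h0
    rw [h0, map_zero] at hws
    omega
  obtain ⟨i, hi⟩ : ∃ i, s i ≠ 0 := by
    by_contra hc
    push_neg at hc
    exact hsne (Finsupp.ext hc)
  have h1 := coeff_pderiv i (s - Finsupp.single i 1) p
  rw [h i, coeff_zero, sub_add_single hi] at h1
  have h2 : ((((s - Finsupp.single i 1) : ℕ →₀ ℕ) i : ℂ) + 1) ≠ 0 :=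
    Nat.cast_add_one_ne_zero _
  exact hs (by
    have := h1.symm
    rcases mul_eq_zero.mp this with h3 | h3
    · exact absurd h3 h2
    · exact h3)

lemma homog_zero {p : MvP} (hp : p.IsWeightedHomogeneous w 0) : p = C (coeff 0 p) := by
  ext s
  by_cases hs : s = 0
  · subst hs; simp
  · rw [coeff_C, if_neg (Ne.symm hs)]
    by_contra hc
    have hws := hp hc
    obtain ⟨i, hi⟩ : ∃ i, s i ≠ 0 := by
      by_contra hc2
      push_neg at hc2
      exact hs (Finsupp.ext hc2)
    have hwi : w i ≠ 0 := by unfold w; split <;> omega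
    have := Finsupp.le_weight w hwi s
    omega

lemma coeff_single0_Tx (q : MvP) (m : ℕ) :
    coeff (Finsupp.single 0 m) (Tx q) = 0 := by
  nth_rewrite 1 [q.as_sum]
  rw [map_sum, coeff_sum]
  apply Finset.sum_eq_zero
  intro s hs
  rw [Tx_monomial, coeff_smul]
  rw [Finsupp.sum]
  rw [coeff_sum]
  rw [Finset.sum_eq_zero, smul_zero]
  intro i hi
  by_cases hi0 : i = 0
  · rw [if_pos hi0, smul_zero, coeff_zero]
  · rw [if_neg hi0, smul_eq_mul, X, monomial_mul, mul_one, coeff_monomial]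
    rw [if_neg]
    intro he
    have h2 := DFunLike.congr_fun he (i + 1)
    rw [Finsupp.add_apply, Finsupp.single_apply, Finsupp.single_apply,
      if_pos rfl, if_neg (show (0:ℕ) ≠ i + 1 by omega)] at h2
    omega

lemma Q_coeff (β : ℂ) (d : ℕ) : coeff (Finsupp.single 0 d) (Q β d) = 1 := by
  induction d with
  | zero =>
    simp [Q]
  | succ d ih =>
    rw [Q_succ]
    unfold Lf
    rw [coeff_add, coeff_add, coeff_single0_Tx, coeff_C_mul,
      show Finsupp.single 0 (d+1) = Finsupp.single 0 1 + Finsupp.single 0 d from by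
        rw [← Finsupp.single_add]; congr 1; omega,
      coeff_X_mul, ih, coeff_X_mul']
    rw [if_neg (by
      simp only [Finsupp.mem_support_iff, Finsupp.add_apply, Finsupp.single_apply]
      norm_num)]
    norm_num

lemma pderiv0_Q (β : ℂ) (d : ℕ) :
    pderiv 0 (Q β (d+1)) = C ((d:ℂ) + 1) * Q β d := by
  induction d with
  | zero =>
    rw [Q_succ, pderiv0_Lf]
    have h1 : pderiv 0 (Q β 0) = 0 := by
      rw [show Q β 0 = 1 from rfl]
      exact Derivation.map_one_eq_zero _
    rw [h1, Lf_zero, add_zero]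
    norm_num
  | succ e ih =>
    rw [Q_succ, pderiv0_Lf, ih, Lf_Cmul, ← Q_succ]
    have h9 : (C ((e:ℂ) + 1 + 1) : MvP) = 1 + C ((e:ℂ) + 1) := by
      rw [map_add, map_one, add_comm]
    push_cast
    rw [h9]
    ring

lemma Q_system {α β : ℂ} (hα : α ≠ 0) (hβ : β = 1 / α) (d : ℕ) (δ : ℂ) (k : ℕ) (hk : 1 ≤ k) :
    C ((k.factorial : ℂ)⁻¹) * Df^[k] (C δ * Q β d) = C α * pderiv k (C δ * Q β d) := by
  have hαβ : α * β = 1 := by rw [hβ]; field_simp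
  rw [Df_Cmul, Q_sol hαβ d k hk, pderiv_Cmul]
  rw [show (C ((k.factorial : ℂ)⁻¹) : MvP) * (C δ * (C ((k.factorial : ℂ) * α) * pderiv k (Q β d)))
      = (C ((k.factorial : ℂ)⁻¹) * C ((k.factorial : ℂ) * α)) * (C δ * pderiv k (Q β d)) from by
    ring]
  rw [← map_mul]
  have h1 : ((k.factorial : ℂ))⁻¹ * ((k.factorial : ℂ) * α) = α := by
    have h2 : (k.factorial : ℂ) ≠ 0 := Nat.cast_ne_zero.mpr (Nat.factorial_ne_zero k)
    field_simp
  rw [h1]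

lemma uniq {α β : ℂ} (hα : α ≠ 0) (hβ : β = 1 / α) :
    ∀ (d : ℕ) (P : MvP), P.IsWeightedHomogeneous w d →
    (∀ k : ℕ, 1 ≤ k → C ((k.factorial : ℂ)⁻¹) * Df^[k] P = C α * pderiv k P) →
    ∃ δ : ℂ, P = C δ * Q β d := by
  intro d
  induction d with
  | zero =>
    intro P hP _
    refine ⟨coeff 0 P, ?_⟩
    rw [show Q β 0 = 1 from rfl, mul_one]
    exact homog_zero hP
  | succ d ih =>
    intro P hP hsys
    have hP' : (pderiv 0 P).IsWeightedHomogeneous w d := pderiv_homog hP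
    have hsys' : ∀ k : ℕ, 1 ≤ k →
        C ((k.factorial : ℂ)⁻¹) * Df^[k] (pderiv 0 P) = C α * pderiv k (pderiv 0 P) := by
      intro k hk
      have h1 := congrArg (fun r : MvP => pderiv 0 r) (hsys k hk)
      simp only [pderiv_Cmul] at h1
      have h2 : pderiv 0 (Df^[k] P) = Df^[k] (pderiv 0 P) := by
        rw [show pderiv 0 (Df^[k] P) = Df (Df^[k] P) from rfl,
          ← Function.iterate_succ_apply' Df k P, Function.iterate_succ_apply Df k P]
        rfl
      rw [h2, bracket_pderiv] at h1
      exact h1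
    obtain ⟨δ', hδ'⟩ := ih (pderiv 0 P) hP' hsys'
    refine ⟨δ' / ((d:ℂ) + 1), ?_⟩
    set δ := δ' / ((d:ℂ) + 1) with hδ
    have hd1 : ((d:ℂ) + 1) ≠ 0 := Nat.cast_add_one_ne_zero d
    set R := P - C δ * Q β (d+1) with hR
    have hDR : pderiv 0 R = 0 := by
      rw [hR, map_sub, pderiv_Cmul, pderiv0_Q, hδ', ← mul_assoc, ← map_mul]
      rw [show δ' / ((d:ℂ) + 1) * ((d:ℂ) + 1) = δ' from by field_simp]
      ring
    have hall : ∀ i : ℕ, pderiv i R = 0 := by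
      intro i
      rcases Nat.eq_zero_or_pos i with hi | hi
      · rw [hi]; exact hDR
      · have hsysR : C ((i.factorial : ℂ)⁻¹) * Df^[i] R = C α * pderiv i R := by
          rw [hR, Df_sub, map_sub, mul_sub, mul_sub, hsys i hi, Q_system hα hβ (d+1) δ i hi]
        have hDfR : Df^[i] R = 0 := by
          obtain ⟨m, rfl⟩ : ∃ m, i = m + 1 := ⟨i - 1, by omega⟩
          rw [Function.iterate_succ_apply, show Df R = 0 from hDR, Df_zero]
        rw [hDfR, mul_zero] at hsysR
        have := hsysR.symm
        rcases mul_eq_zero.mp this with h3 | h3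
        · exact absurd (C_eq_zero.mp h3) hα
        · exact h3
    have hRhom : R.IsWeightedHomogeneous w (d+1) := by
      have h1 : (C δ * Q β (d+1)).IsWeightedHomogeneous w (d+1) := by
        have := (isWeightedHomogeneous_C w δ).mul (Q_homog β (d+1))
        rwa [zero_add] at this
      have h2 : R ∈ weightedHomogeneousSubmodule ℂ w (d+1) := by
        rw [hR]
        exact Submodule.sub_mem _ ((mem_weightedHomogeneousSubmodule (R:=ℂ) w _ P).mpr hP)
          ((mem_weightedHomogeneousSubmodule (R:=ℂ) w _ _).mpr h1)
      exact (mem_weightedHomogeneousSubmodule (R:=ℂ) w _ R).mp h2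
    have hR0 : R = 0 := eq_zero_of_pderiv (by omega) hRhom hall
    rw [← sub_eq_zero]
    exact hR0

lemma not_mem_vars_of_pderiv {i : ℕ} {p : MvP} (h : pderiv i p = 0) : i ∉ p.vars := by
  intro hmem
  obtain ⟨s, hs, his⟩ := (mem_vars i).mp hmem
  have hsi : s i ≠ 0 := Finsupp.mem_support_iff.mp his
  have h1 := coeff_pderiv i (s - Finsupp.single i 1) p
  rw [h, coeff_zero, sub_add_single hsi] at h1
  have h2 : ((((s - Finsupp.single i 1) : ℕ →₀ ℕ) i : ℂ) + 1) ≠ 0 :=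
    Nat.cast_add_one_ne_zero _
  refine (mem_support_iff.mp hs) ?_
  rcases mul_eq_zero.mp h1.symm with h3 | h3
  · exact absurd h3 h2
  · exact h3

end Stmt11Aux


open Stmt11Aux in
/-- (a) For `α = 0`, the system `(1/k!) ∂ᵏP/∂λᵏ = α ∂P/∂x_k (k ≥ 1)` holds iff `P` is
independent of `λ`.  (b) For `α ≠ 0`, `β = 1/α`, and `P` homogeneous of degree `d ≥ 1`
(for `deg λ = 1`, `deg x_k = k`), the system holds iff `P = δ·(M_λ + T + β·M_{x₁})^d(1)`
for some `δ ∈ ℂ`. -/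
theorem stmt11 (α : ℂ) (P : MvPolynomial ℕ ℂ) :
    (α = 0 →
      ((∀ k : ℕ, 1 ≤ k →
          C ((k.factorial : ℂ)⁻¹) * (fun q => pderiv 0 q)^[k] P = C α * pderiv k P)
        ↔ P ∈ MvPolynomial.supported ℂ {k : ℕ | k ≠ 0}))
    ∧ ∀ β : ℂ, ∀ d : ℕ, α ≠ 0 → β = 1 / α → 1 ≤ d →
        P.IsWeightedHomogeneous (fun k => if k = 0 then 1 else k) d →
        ((∀ k : ℕ, 1 ≤ k →
            C ((k.factorial : ℂ)⁻¹) * (fun q => pderiv 0 q)^[k] P = C α * pderiv k P)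
          ↔ ∃ δ : ℂ,
              P = C δ * (fun q => X 0 * q + Tx q + C β * (X 1 * q))^[d] 1) := by
  constructor
  · intro hα0
    constructor
    · intro hsys
      have h1 := hsys 1 le_rfl
      rw [hα0] at h1
      simp only [Nat.factorial_one, Nat.cast_one, inv_one, map_one, one_mul, map_zero,
        zero_mul, Function.iterate_one] at h1
      rw [MvPolynomial.mem_supported]
      intro i hi
      simp only [Set.mem_setOf_eq]
      intro hi0
      subst hi0
      exact not_mem_vars_of_pderiv h1 (by exact_mod_cast hi)
    · intro hsupp k hk
      have h0 : pderiv 0 P = 0 := by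
        apply pderiv_eq_zero_of_notMem_vars
        intro hmem
        rw [MvPolynomial.mem_supported] at hsupp
        exact (hsupp (by exact_mod_cast hmem)) rfl
      have h2 : (fun q : MvP => pderiv 0 q)^[k] P = 0 := by
        obtain ⟨m, rfl⟩ : ∃ m, k = m + 1 := ⟨k - 1, by omega⟩
        rw [Function.iterate_succ_apply]
        show (fun q : MvP => pderiv 0 q)^[m] ((pderiv 0) P) = 0
        rw [h0]
        exact Df_zero m
      rw [h2, hα0]
      simp
  · intro β d hα hβ _hd hhom
    constructor
    · intro hsys
      obtain ⟨δ, hδ⟩ := uniq hα hβ d P hhom hsys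
      exact ⟨δ, hδ⟩
    · rintro ⟨δ, rfl⟩ k hk
      exact Q_system hα hβ d δ k hk
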